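/- Let m, n ≥ 1, let H be a finite group of linear isometries of ℂ^m, let v₀ ∈ ℂ^m be a unit vector, and let x₀ = (u₁v₀, …, uₙv₀) ∈ (ℂ^m)^n where 0 < u₁ < ⋯ < uₙ are real, with the inner product ⟨x, y⟩ = Σᵢ ⟨xᵢ, yᵢ⟩ on (ℂ^m)^n. Let x = (x₁, …, xₙ) ∈ (ℂ^m)^n. Suppose h₁, …, hₙ ∈ H satisfy Re⟨v₀, hᵢ xᵢ⟩ ≥ Re⟨v₀, k xᵢ⟩ for all k ∈ H and all i, and σ is a permutation of {1, …, n} with Re⟨v₀, h_{σ(1)} x_{σ(1)}⟩ ≤ Re⟨v₀, h_{σ(2)} x_{σ(2)}⟩ ≤ ⋯ ≤ Re⟨v₀, h_{σ(n)} x_{σ(n)}⟩. Let g x = (h_{σ(1)} x_{σ(1)}, …, h_{σ(n)} x_{σ(n)}). Then for every permutation τ of {1, …, n} and all k₁, …, kₙ ∈ H, setting g' x = (k_{τ(1)} x_{τ(1)}, …, k_{τ(n)} x_{τ(n)}), one has ‖g x − x₀‖ ≤ ‖g' x − x₀‖. In other words, g minimizes the distance of the transformed vector to x₀ over the whole wreath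 product of H with Sym(n) acting on (ℂ^m)^n. -/

import Mathlib

noncomputable section


/-- **Theorem (Statement 19).** For the wreath product of `H` with `Sym(n)` acting on
`(ℂ^m)^n`, choosing at each coordinate an element of `H` maximizing `Re⟨v₀, hᵢ xᵢ⟩` and a
permutation sorting these quantities increasingly minimizes the distance of the
transformed vector to the initial vector `x₀ = (u₁v₀, …, uₙv₀)` over the whole wreath
product. -/
theorem wreath_sort_minimizes
    (m n : ℕ) (hm : 1 ≤ m) (hn : 1 ≤ n)
    (H : Subgroup ((EuclideanSpace ℂ (Fin m)) ≃ₗᵢ[ℂ] (EuclideanSpace ℂ (Fin m))))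
    (hHfin : (H : Set ((EuclideanSpace ℂ (Fin m)) ≃ₗᵢ[ℂ] (EuclideanSpace ℂ (Fin m)))).Finite)
    (v₀ : EuclideanSpace ℂ (Fin m)) (hv₀ : ‖v₀‖ = 1)
    (u : Fin n → ℝ) (hu : ∀ i, 0 < u i) (humono : StrictMono u)
    (x₀ : PiLp 2 (fun _ : Fin n => EuclideanSpace ℂ (Fin m)))
    (hx₀ : ∀ i, x₀ i = (u i : ℂ) • v₀)
    (x : PiLp 2 (fun _ : Fin n => EuclideanSpace ℂ (Fin m)))
    (h : Fin n → (EuclideanSpace ℂ (Fin m)) ≃ₗᵢ[ℂ] (EuclideanSpace ℂ (Fin m)))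
    (hh : ∀ i, h i ∈ H)
    (hmax : ∀ (i : Fin n), ∀ k ∈ H,
      (inner ℂ v₀ (k (x i)) : ℂ).re ≤ (inner ℂ v₀ (h i (x i)) : ℂ).re)
    (σ : Equiv.Perm (Fin n))
    (hsort : ∀ i j : Fin n, i ≤ j →
      (inner ℂ v₀ (h (σ i) (x (σ i))) : ℂ).re ≤ (inner ℂ v₀ (h (σ j) (x (σ j))) : ℂ).re)
    (gx : PiLp 2 (fun _ : Fin n => EuclideanSpace ℂ (Fin m)))
    (hgx : ∀ i, gx i = h (σ i) (x (σ i)))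
    (τ : Equiv.Perm (Fin n))
    (k : Fin n → (EuclideanSpace ℂ (Fin m)) ≃ₗᵢ[ℂ] (EuclideanSpace ℂ (Fin m)))
    (hk : ∀ i, k i ∈ H)
    (g'x : PiLp 2 (fun _ : Fin n => EuclideanSpace ℂ (Fin m)))
    (hg'x : ∀ i, g'x i = k (τ i) (x (τ i))) :
    ‖gx - x₀‖ ≤ ‖g'x - x₀‖ := by

  classical
  set f : Fin n → ℝ := fun j => (inner ℂ v₀ (h j (x j)) : ℂ).re with hf
  -- norm expansion per coordinate
  have expand : ∀ y : PiLp 2 (fun _ : Fin n => EuclideanSpace ℂ (Fin m)),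
      ‖y - x₀‖ ^ 2 = ∑ i, (‖y i‖ ^ 2 - 2 * (u i * (inner ℂ v₀ (y i) : ℂ).re) + (u i) ^ 2) := by
    intro y
    rw [PiLp.norm_sq_eq_of_L2]
    refine Finset.sum_congr rfl fun i _ => ?_
    have h1 : (y - x₀) i = y i - x₀ i := rfl
    rw [h1, @norm_sub_sq ℂ]
    have h2 : ((inner ℂ (y i) (x₀ i) : ℂ)).re = u i * (inner ℂ v₀ (y i) : ℂ).re := by
      rw [hx₀, inner_smul_right]
      have h3 : ((u i : ℂ) * (inner ℂ (y i) v₀ : ℂ)).re = u i * ((inner ℂ (y i) v₀ : ℂ)).re :=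
        Complex.re_ofReal_mul _ _
      rw [h3]
      congr 1
      exact inner_re_symm (𝕜 := ℂ) (y i) v₀
    have h4 : ‖x₀ i‖ = u i := by
      rw [hx₀, norm_smul]
      simp [abs_of_pos (hu i), hv₀]
    rw [h4]
    have h2' : RCLike.re (inner ℂ (y i) (x₀ i) : ℂ) = u i * (inner ℂ v₀ (y i) : ℂ).re := h2
    rw [h2']
  -- the key rearrangement inequality
  have key : ∑ i, u i * (inner ℂ v₀ (g'x i) : ℂ).re ≤ ∑ i, u i * f (σ i) := by
    have step1 : ∑ i, u i * (inner ℂ v₀ (g'x i) : ℂ).re ≤ ∑ i, u i * f (τ i) := by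
      refine Finset.sum_le_sum fun i _ => ?_
      rw [hg'x]
      exact mul_le_mul_of_nonneg_left (hmax (τ i) (k (τ i)) (hk (τ i))) (hu i).le
    refine step1.trans ?_
    have hmono : Monovary u (f ∘ σ) := by
      intro i j hij
      simp only [Function.comp_apply, hf] at hij
      rcases le_or_gt j i with hle | hlt
      · exact ((not_le.mpr hij) (hsort j i hle)).elim
      · exact humono.monotone hlt.le
    have := hmono.sum_mul_comp_perm_le_sum_mul (σ := σ⁻¹ * τ)
    simpa [Function.comp, Equiv.Perm.mul_apply] using this
  have hisoσ : ∀ i : Fin n, ‖gx i‖ = ‖x (σ i)‖ := fun i => by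
    rw [hgx]; exact (h (σ i)).norm_map _
  have hisoτ : ∀ i : Fin n, ‖g'x i‖ = ‖x (τ i)‖ := fun i => by
    rw [hg'x]; exact (k (τ i)).norm_map _
  have hsumnorm : ∑ i, ‖x (σ i)‖ ^ 2 = ∑ i, ‖x (τ i)‖ ^ 2 := by
    rw [Equiv.sum_comp σ (fun j => ‖x j‖ ^ 2), Equiv.sum_comp τ (fun j => ‖x j‖ ^ 2)]
  have hsq : ‖gx - x₀‖ ^ 2 ≤ ‖g'x - x₀‖ ^ 2 := by
    rw [expand gx, expand g'x]
    simp only [Finset.sum_add_distrib, Finset.sum_sub_distrib]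
    have e1 : ∑ i, ‖gx i‖ ^ 2 = ∑ i, ‖g'x i‖ ^ 2 := by
      simp only [hisoσ, hisoτ]; exact hsumnorm
    have e2 : ∑ i, u i * (inner ℂ v₀ (gx i) : ℂ).re = ∑ i, u i * f (σ i) := by
      refine Finset.sum_congr rfl fun i _ => ?_
      rw [hgx]
    rw [e1]
    have := key
    rw [← e2] at this
    have m1 : ∑ i, 2 * (u i * (inner ℂ v₀ (gx i) : ℂ).re)
        = 2 * ∑ i, u i * (inner ℂ v₀ (gx i) : ℂ).re := by rw [Finset.mul_sum]
    have m2 : ∑ i, 2 * (u i * (inner ℂ v₀ (g'x i) : ℂ).re)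
        = 2 * ∑ i, u i * (inner ℂ v₀ (g'x i) : ℂ).re := by rw [Finset.mul_sum]
    linarith
  have h2 : (0:ℝ) ≤ ‖g'x - x₀‖ := norm_nonneg _
  nlinarith [norm_nonneg (gx - x₀), norm_nonneg (g'x - x₀)]
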